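/- arXiv:2501.08823 — 2 statements merged into one kernel-verified Lean document; each statement's English description precedes it below -/
import Mathlib

section
/- For every n ∈ ℕ, the fractional-part condition {(n+1)φ} < 2 − φ holds if and only if there exists k ≥ 1 with n + 1 = ⌊kφ²⌋. -/
/-- The golden ratio `(1 + √5)/2`. -/
noncomputable def phi : ℝ := (1 + Real.sqrt 5) / 2

lemma sq5 : Real.sqrt 5 ^ 2 = 5 := Real.sq_sqrt (by norm_num)

lemma phi_sq : phi ^ 2 = phi + 1 := by
  unfold phi; have := sq5; nlinarith [Real.sqrt_nonneg 5]

lemma phi_gt_one : 1 < phi := by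
  unfold phi
  nlinarith [sq5, Real.sqrt_nonneg 5]

lemma phi_lt_two : phi < 2 := by
  unfold phi
  nlinarith [sq5, Real.sqrt_nonneg 5]

lemma irr_phi : Irrational phi := by
  have h5 : Irrational (Real.sqrt 5) := (by norm_num : Nat.Prime 5).irrational_sqrt
  have : Irrational ((1 : ℕ) + Real.sqrt 5) := h5.natCast_add 1
  have := this.div_natCast (m := 2) (by norm_num)
  simpa [phi] using this

lemma irr_mul_phi (m : ℕ) (hm : m ≠ 0) : Irrational ((m : ℝ) * phi) :=
  irr_phi.natCast_mul hm

lemma fract_ne_zero (m : ℕ) (hm : m ≠ 0) : Int.fract ((m : ℝ) * phi) ≠ 0 := by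
  intro h
  have h2 : (m : ℝ) * phi = (⌊(m : ℝ) * phi⌋ : ℝ) := by
    have := Int.fract_add_floor ((m : ℝ) * phi)
    rw [h] at this; linarith
  exact (irr_mul_phi m hm).ne_int _ h2

-- key: fract (m * (2 - phi)) = 1 - fract (m * phi)
lemma fract_compl (m : ℕ) (hm : m ≠ 0) :
    Int.fract ((m : ℝ) * (2 - phi)) = 1 - Int.fract ((m : ℝ) * phi) := by
  have h1 : (m : ℝ) * (2 - phi) = -((m : ℝ) * phi) + ((2 * m : ℤ) : ℝ) := by
    push_cast; ring
  rw [h1, Int.fract_add_intCast, Int.fract_neg (fract_ne_zero m hm)]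

theorem fract_condition_iff (n : ℕ) :
    Int.fract (((n : ℝ) + 1) * phi) < 2 - phi ↔
      ∃ k : ℕ, 1 ≤ k ∧ n + 1 = ⌊(k : ℝ) * phi ^ 2⌋₊ := by
  have hm : ((n : ℝ) + 1) = ((n + 1 : ℕ) : ℝ) := by push_cast; ring
  have h1 : 1 < phi := phi_gt_one
  have h2 : phi < 2 := phi_lt_two
  have hsq : phi ^ 2 = phi + 1 := phi_sq
  have hinv : (2 - phi) * phi ^ 2 = 1 := by nlinarith
  set x : ℝ := ((n : ℝ) + 1) * (2 - phi) with hx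
  have hxpos : 0 < x := by
    have : (0:ℝ) < (n:ℝ) + 1 := by positivity
    nlinarith
  have hcompl : Int.fract x = 1 - Int.fract (((n : ℝ) + 1) * phi) := by
    rw [hx, hm]; exact fract_compl (n+1) (Nat.succ_ne_zero n)
  constructor
  · intro h
    refine ⟨⌊x⌋₊ + 1, by omega, ?_⟩
    have hfl : ((⌊x⌋₊ : ℝ)) = (⌊x⌋ : ℝ) := by
      exact_mod_cast congrArg (Int.cast : ℤ → ℝ) (Int.natCast_floor_eq_floor hxpos.le)
    have hfr : Int.fract x = x - (⌊x⌋₊ : ℝ) := by rw [hfl]; exact Int.self_sub_floor x ▸ rfl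
    have hfr2 : Int.fract x > phi - 1 := by rw [hcompl]; linarith
    have hfr3 : Int.fract x < 1 := Int.fract_lt_one x
    symm
    rw [Nat.floor_eq_iff (by positivity)]
    constructor
    · push_cast
      -- (n+1 : ℝ) ≤ (⌊x⌋₊ + 1) * phi^2
      have : x * phi ^ 2 = (n : ℝ) + 1 := by rw [hx]; nlinarith
      nlinarith [hfr, hfr3]
    · push_cast
      have : x * phi ^ 2 = (n : ℝ) + 1 := by rw [hx]; nlinarith
      nlinarith [hfr, hfr2]
  · rintro ⟨k, hk1, hk⟩
    have hkpos : (0:ℝ) < (k : ℝ) * phi ^ 2 := by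
      have : (1:ℝ) ≤ (k:ℝ) := by exact_mod_cast hk1
      nlinarith
    have hle : ((n : ℝ) + 1) ≤ (k : ℝ) * phi ^ 2 := by
      have := Nat.floor_le hkpos.le
      rw [← hk] at this; push_cast at this ⊢; linarith
    have hlt : (k : ℝ) * phi ^ 2 < (n : ℝ) + 2 := by
      have := Nat.lt_floor_add_one ((k : ℝ) * phi ^ 2)
      rw [← hk] at this; push_cast at this ⊢; linarith
    -- so x = (n+1)(2-phi) ∈ (k - (2-phi), k], indeed k - x ∈ [0, 2-phi)
    have hne : (k : ℝ) * phi ^ 2 ≠ (n : ℝ) + 1 := by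
      intro he
      have hkirr : Irrational ((k : ℝ) * phi ^ 2) := by
        have : Irrational ((k : ℝ) * phi) := irr_mul_phi k (by omega)
        have h' : (k : ℝ) * phi ^ 2 = (k : ℝ) * phi + ((k : ℤ) : ℝ) := by
          push_cast; nlinarith
        rw [h']; exact this.add_intCast k
      have : ((n + 1 : ℤ) : ℝ) = (k : ℝ) * phi ^ 2 := by push_cast; linarith
      exact hkirr.ne_int _ this.symm
    have hlt' : ((n : ℝ) + 1) < (k : ℝ) * phi ^ 2 := lt_of_le_of_ne hle (Ne.symm hne)
    -- x = ((n+1)) (2-phi); k - x = ((k phi^2) - (n+1)) (2-phi) ∈ (0, 2-phi)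
    have hx1 : (k : ℝ) - x = ((k : ℝ) * phi ^ 2 - ((n : ℝ) + 1)) * (2 - phi) := by
      rw [hx]; nlinarith
    have hp : (0:ℝ) < 2 - phi := by linarith
    have hd1 : 0 < (k : ℝ) - x := by
      rw [hx1]; exact mul_pos (by linarith) hp
    have hd2 : (k : ℝ) - x < 2 - phi := by
      rw [hx1]
      have := mul_lt_mul_of_pos_right
        (show (k:ℝ) * phi ^ 2 - ((n:ℝ) + 1) < 1 by linarith) hp
      linarith
    have hfr : Int.fract x = x - ((k : ℤ) - 1 : ℤ) := by
      rw [Int.fract_eq_iff]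
      refine ⟨by push_cast; linarith, by push_cast; linarith, (k : ℤ) - 1, by push_cast; ring⟩
    have : Int.fract x > phi - 1 := by rw [hfr]; push_cast; linarith
    rw [hcompl] at this; linarith
end

section
/- For every n ∈ ℕ, if the diagonal entry d(n) = A(n,n) of the Hurt-Sada array satisfies d(n) < n, then d(n) = ⌊(4 − 2φ)n + (5 − 3φ)⌋. -/
/-- The Hurt-Sada array `A : ℕ → ℕ → ℕ`.  Row `0` is the identity sequence;
row `n+1` is obtained from row `n` by moving the entry `n+1` (located at the unique
position `p` with `A n p = n+1`) by `n+1` places to the right, shifting the jumped-over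
entries one place left. -/
noncomputable def A : ℕ → ℕ → ℕ
  | 0, k => k
  | n + 1, j =>
    let p := sInf {i | A n i = n + 1}
    if j < p then A n j
    else if j < p + (n + 1) then A n (j + 1)
    else if j = p + (n + 1) then n + 1
    else A n j

/-! ### Basic facts about `phi` -/

lemma sqrt5_sq : Real.sqrt 5 * Real.sqrt 5 = 5 :=
  Real.mul_self_sqrt (by norm_num)

lemma sqrt5_gt : (2 : ℝ) < Real.sqrt 5 := by
  nlinarith [sqrt5_sq, Real.sqrt_nonneg 5]

lemma sqrt5_lt : Real.sqrt 5 < 9/4 := by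
  nlinarith [sqrt5_sq, Real.sqrt_nonneg 5]

/-- `c = phi - 1 = 1/phi`. -/
noncomputable def c : ℝ := phi - 1

lemma c_pos : (1/2 : ℝ) < c := by unfold c phi; nlinarith [sqrt5_gt]
lemma c_lt : c < 5/8 := by unfold c phi; nlinarith [sqrt5_lt]
lemma c_sq : c * c = 1 - c := by unfold c phi; nlinarith [sqrt5_sq]

lemma irr_c : Irrational c := by
  have h5 : Irrational (Real.sqrt 5) := (by norm_num : Nat.Prime 5).irrational_sqrt
  have h := (h5.div_intCast (m := 2) (by norm_num)).ratCast_add (-1/2)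
  have heq : c = ((-1/2 : ℚ) : ℝ) + Real.sqrt 5 / ((2 : ℤ) : ℝ) := by
    unfold c phi; push_cast; ring
  rw [heq]; exact h

/-! ### The position function -/

/-- `F k = ⌊(k+1) * (phi - 1)⌋`. -/
noncomputable def F (k : ℕ) : ℕ := ⌊((k : ℝ) + 1) * c⌋₊

lemma F_le_real (k : ℕ) : (F k : ℝ) ≤ ((k : ℝ) + 1) * c :=
  Nat.floor_le (by nlinarith [c_pos, Nat.cast_nonneg (α := ℝ) k])

lemma F_lt_real (k : ℕ) : (F k : ℝ) < ((k : ℝ) + 1) * c := by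
  refine lt_of_le_of_ne (F_le_real k) fun hEq => ?_
  have : Irrational (((k : ℝ) + 1) * c) := by
    have : ((k : ℝ) + 1) * c = ((((k : ℕ) + 1 : ℚ)) : ℝ) * c := by push_cast; ring
    rw [this]
    exact irr_c.ratCast_mul (by positivity)
  exact this.ne_nat (F k) hEq.symm

lemma real_lt_F (k : ℕ) : ((k : ℝ) + 1) * c < (F k : ℝ) + 1 :=
  Nat.lt_floor_add_one _

lemma F_mono : Monotone F := fun a b hab => by
  refine Nat.floor_mono ?_
  have h : (a:ℝ) ≤ (b:ℝ) := by exact_mod_cast hab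
  nlinarith [c_pos]

lemma F_le (k : ℕ) : F k ≤ k := by
  have := real_lt_F k
  have h1 : ((k : ℝ) + 1) * c < (k : ℝ) + 1 := by nlinarith [c_lt, Nat.cast_nonneg (α := ℝ) k]
  have : (F k : ℝ) < (k : ℝ) + 1 := lt_of_le_of_lt (F_le_real k) h1
  exact_mod_cast Nat.lt_add_one_iff.mp (by exact_mod_cast this)

lemma F_pos (k : ℕ) (hk : 1 ≤ k) : 1 ≤ F k := by
  have hk' : (1 : ℝ) ≤ (k : ℝ) := by exact_mod_cast hk
  have : (1 : ℝ) ≤ ((k : ℝ) + 1) * c := by nlinarith [c_pos]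
  exact Nat.le_floor (by exact_mod_cast this)

/-- f2 : `F (k + F k) = k`. -/
lemma F_FK (k : ℕ) : F (k + F k) = k := by
  have h1 := F_lt_real k
  have h2 := real_lt_F k
  have hc := c_pos
  have hc2 := c_sq
  have hcl := c_lt
  have hk : (0:ℝ) ≤ (k:ℝ) := Nat.cast_nonneg k
  apply le_antisymm
  · have : ((k:ℝ) + (F k : ℝ) + 1) * c < (k:ℝ) + 1 := by nlinarith
    have hfloor : (F (k + F k) : ℝ) < (k:ℝ) + 1 := by
      refine lt_of_le_of_lt ?_ this
      have := F_le_real (k + F k)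
      push_cast at this ⊢; linarith
    exact_mod_cast Nat.lt_add_one_iff.mp (by exact_mod_cast hfloor)
  · have : (k:ℝ) ≤ ((k:ℝ) + (F k : ℝ) + 1) * c := by nlinarith
    refine Nat.le_floor ?_
    push_cast; push_cast at this; linarith

/-- f4 : if `m ≤ F k + k` then `F m ≤ k`. -/
lemma f4 {m k : ℕ} (h : m ≤ F k + k) : F m ≤ k := by
  have := F_mono (show m ≤ k + F k by omega)
  rw [F_FK] at this; exact this

/-- f3 : if `F k + k + 1 ≤ m` then `k + 1 ≤ F m`. -/
lemma f3 {m k : ℕ} (h : F k + k + 1 ≤ m) : k + 1 ≤ F m := by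
  have h2 := real_lt_F k
  have hc := c_pos
  have hc2 := c_sq
  have hm : (F k : ℝ) + (k:ℝ) + 1 ≤ (m:ℝ) := by exact_mod_cast h
  have hk : (0:ℝ) ≤ (k:ℝ) := Nat.cast_nonneg k
  refine Nat.le_floor ?_
  have : ((k:ℝ) + 1) ≤ ((m:ℝ) + 1) * c := by nlinarith
  push_cast; linarith

/-- f6 : if `m + 1 ≤ F k` then `m + F m + 1 ≤ k`. -/
lemma f6 {m k : ℕ} (h : m + 1 ≤ F k) : m + F m + 1 ≤ k := by
  have h1 := F_le_real k
  have h2 := F_lt_real m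
  have hc := c_pos
  have hc2 := c_sq
  have hm : ((m:ℝ) + 1) ≤ (F k : ℝ) := by exact_mod_cast h
  have hcast : (m:ℝ) + (F m : ℝ) < (k : ℝ) := by nlinarith
  have : (m + F m : ℕ) < k := by exact_mod_cast (by push_cast; linarith : ((m + F m : ℕ) : ℝ) < (k:ℝ))
  omega

/-- f7 : if `F k = m` then `k ≤ m + F m`. -/
lemma f7 {m k : ℕ} (h : F k = m) : k ≤ m + F m := by
  have h1 := real_lt_F k
  have h2 := real_lt_F m
  have hc := c_pos
  have hc2 := c_sq
  have hm : ((k:ℝ) + 1) * c < (m:ℝ) + 1 := by rw [← h]; exact_mod_cast h1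
  have hcast : (k:ℝ) < (m:ℝ) + (F m : ℝ) + 1 := by nlinarith
  have : k < m + F m + 1 := by exact_mod_cast (by push_cast; linarith : ((k:ℕ) : ℝ) < ((m + F m + 1 : ℕ) : ℝ))
  omega

/-- f8 : if `F k + 1 ≤ m` then `k + 1 ≤ m + F m`. -/
lemma f8 {m k : ℕ} (h : F k + 1 ≤ m) : k + 1 ≤ m + F m := by
  have h1 := real_lt_F k
  have h2 := real_lt_F m
  have hc := c_pos
  have hc2 := c_sq
  have hm : (F k : ℝ) + 1 ≤ (m:ℝ) := by exact_mod_cast h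
  have hcast : (k:ℝ) + 1 < (m:ℝ) + (F m : ℝ) + 1 := by nlinarith
  have : k + 1 < m + F m + 1 := by exact_mod_cast (by push_cast; linarith : ((k + 1:ℕ) : ℝ) < ((m + F m + 1 : ℕ) : ℝ))
  omega

/-- The position of value `k` in row `n`. -/
noncomputable def B (n k : ℕ) : ℕ :=
  if k ≤ n then max k (F k + 2 * k - n) else min k (F k + k - n - 1)

/-- The shift permutation used to pass from row `n` to row `n+1`. -/
def sig (p m j : ℕ) : ℕ :=
  if j < p then j else if j < p + m then j + 1 else if j = p + m then p else j

lemma sig_inj (p m : ℕ) : Function.Injective (sig p m) := by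
  intro a b hab
  unfold sig at hab
  split_ifs at hab <;> omega

/-- The key combinatorial identity. -/
lemma key (n k : ℕ) : sig (F (n+1)) (n+1) (B (n+1) k) = B n k := by
  have hm := F_le (n+1)
  by_cases hk : k ≤ n
  · by_cases ht : F k + k ≤ n
    · have h3 : k + 1 ≤ F (n+1) := f3 (by omega)
      unfold B sig
      split_ifs <;> omega
    · have h4 : F (n+1) ≤ k := f4 (by omega)
      have hf : F k ≤ F (n+1) := F_mono (by omega)
      unfold B sig
      split_ifs <;> omega
  · by_cases hk1 : k = n + 1
    · subst hk1
      unfold B sig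
      split_ifs <;> omega
    · have hk2 : n + 2 ≤ k := by omega
      by_cases h5 : n + 2 ≤ F k
      · have h6 := f6 (m := n+1) (k := k) h5
        unfold B sig
        split_ifs <;> omega
      · by_cases h6 : F k = n + 1
        · have h7 := f7 (m := n+1) h6
          unfold B sig
          split_ifs <;> omega
        · have h8 : F k + 1 ≤ n + 1 := by omega
          have h9 := f8 (m := n+1) h8
          have h10 : F (n+1) ≤ F k := F_mono (by omega)
          unfold B sig
          split_ifs <;> omega

lemma A_zero (j : ℕ) : A 0 j = j := by simp [A]

lemma A_succ (n j : ℕ) (hp : A n (sInf {i | A n i = n + 1}) = n + 1) :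
    A (n+1) j = A n (sig (sInf {i | A n i = n + 1}) (n+1) j) := by
  rw [A]
  unfold sig
  split_ifs <;> first | rfl | (exact hp.symm) | omega

/-- Main invariant: `A n` is injective and `B n` is its right inverse. -/
lemma main_inv : ∀ n : ℕ, Function.Injective (A n) ∧ ∀ k, A n (B n k) = k := by
  intro n
  induction n with
  | zero =>
    constructor
    · intro a b hab; simpa [A_zero] using hab
    · intro k
      have hB : B 0 k = k := by
        rcases Nat.eq_zero_or_pos k with hk | hk
        · subst hk
          have : F 0 = 0 := by
            have h0 := F_lt_real 0
            norm_num at h0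
            have h1 : (F 0 : ℝ) < 1 := by nlinarith [c_lt]
            have h2 : F 0 < 1 := by exact_mod_cast h1
            omega
          unfold B; simp [this]
        · have := F_pos k hk
          unfold B
          have hkn : ¬ (k ≤ 0) := by omega
          rw [if_neg hkn]
          omega
      rw [hB, A_zero]
  | succ n ih =>
    obtain ⟨hinj, hinv⟩ := ih
    have hBn : B n (n+1) = F (n+1) := by
      have := F_le (n+1)
      unfold B
      rw [if_neg (by omega)]
      omega
    have hne : A n (F (n+1)) = n + 1 := by rw [← hBn]; exact hinv (n+1)
    have hSne : {i | A n i = n + 1}.Nonempty := ⟨F (n+1), hne⟩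
    have hp : A n (sInf {i | A n i = n + 1}) = n + 1 := Nat.sInf_mem hSne
    have hpF : sInf {i | A n i = n + 1} = F (n+1) := hinj (hp.trans hne.symm)
    have hA : ∀ j, A (n+1) j = A n (sig (F (n+1)) (n+1) j) := by
      intro j
      rw [A_succ n j hp, hpF]
    constructor
    · intro a b hab
      rw [hA, hA] at hab
      exact sig_inj _ _ (hinj hab)
    · intro k
      rw [hA, key]
      exact hinv k

theorem diagonal_lt_formula (n : ℕ) (h : A n n < n) :
    A n n = ⌊(4 - 2 * phi) * (n : ℝ) + (5 - 3 * phi)⌋₊ := by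
  obtain ⟨hinj, hinv⟩ := main_inv n
  set k := A n n with hk
  have hBk : B n k = n := hinj (by rw [hinv k])
  have hkn : k < n := h
  have h2n : F k + 2 * k = 2 * n := by
    unfold B at hBk
    rw [if_pos (by omega)] at hBk
    omega
  -- real arithmetic
  have h1 := F_le_real k
  have h2 := real_lt_F k
  have hF : (F k : ℝ) = 2 * (n:ℝ) - 2 * (k:ℝ) := by
    have : ((F k : ℕ) : ℝ) + 2 * (k:ℝ) = 2 * (n:ℝ) := by exact_mod_cast h2n
    linarith
  rw [hF] at h1 h2
  have hphi : phi = 1 + c := by unfold c; ring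
  have hc := c_pos
  have hc2 := c_sq
  have hcl := c_lt
  symm
  rw [Nat.floor_eq_iff]
  constructor
  · rw [hphi]; nlinarith
  · rw [hphi]; push_cast; nlinarith
  · rw [hphi]
    have hn1 : (1:ℝ) ≤ (n:ℝ) := by exact_mod_cast (by omega : 1 ≤ n)
    nlinarith
end
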